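/- Let $t_n \le \tau < t_{n+1}$ and let $\check P(\tau) = V(\tau) F^T$ where $V(\tau)$ is the block row vector with entries $V(\tau)_r = \Phi(\tau,t_n)\Phi(t_n,t_r) Q_r$ for $r \le n$, $V(\tau)_{n+1} = Q_\tau \Phi(t_{n+1},\tau)^T$, and $V(\tau)_r = 0$ for $r > n+1$. Then $\check P(\tau)\check P^{-1} = V(\tau) Q^{-1} F^{-1}$ has exactly two (potentially) nonzero block entries, in columns $n$ and $n+1$: $\Lambda(\tau) = \Phi(\tau,t_n) - \Psi(\tau)\Phi(t_{n+1},t_n)$ in column $n$ and $\Psi(\tau) = Q_\tau \Phi(t_{n+1},\tau)^T Q_{n+1}^{-1}$ in column $n+1$. -/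
import Mathlib


open Matrix

/-- Blockwise transpose of a block matrix. -/
def blockT {N d : ℕ}
    (A : Matrix (Fin N) (Fin N) (Matrix (Fin d) (Fin d) ℝ)) :
    Matrix (Fin N) (Fin N) (Matrix (Fin d) (Fin d) ℝ) :=
  Matrix.of fun i j => (A j i)ᵀ

/-- Sum over `Fin (N+1)` of a function supported at `j` and (possibly) `j+1`. -/
lemma sum_delta_pair {M : Type*} [AddCommMonoid M] {N : ℕ} (j : Fin (N + 1))
    (a b : Fin (N + 1) → M) :
    ∑ r : Fin (N + 1),
        ((if r = j then a r else 0) + (if (r : ℕ) = (j : ℕ) + 1 then b r else 0))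
      = a j + if h : (j : ℕ) + 1 ≤ N then b ⟨(j : ℕ) + 1, by omega⟩ else 0 := by
  rw [Finset.sum_add_distrib, Finset.sum_ite_eq' Finset.univ j a]
  simp only [Finset.mem_univ, if_true]
  congr 1
  split_ifs with h
  · rw [Finset.sum_eq_single_of_mem (⟨(j : ℕ) + 1, by omega⟩ : Fin (N + 1))
      (Finset.mem_univ _)]
    · simp
    · intro r _ hr
      rw [if_neg]
      intro hc
      exact hr (Fin.ext hc)
  · apply Finset.sum_eq_zero
    intro r _
    rw [if_neg]
    have := r.isLt
    omega

/-- Sum over `Fin (N+1)` of a function supported at `i` and (possibly) `i-1`. -/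
lemma sum_delta_pair' {M : Type*} [AddCommMonoid M] {N : ℕ} (i : Fin (N + 1))
    (a b : Fin (N + 1) → M) :
    ∑ r : Fin (N + 1),
        ((if r = i then a r else 0) + (if (i : ℕ) = (r : ℕ) + 1 then b r else 0))
      = a i + if h : 1 ≤ (i : ℕ) then b ⟨(i : ℕ) - 1, by omega⟩ else 0 := by
  rw [Finset.sum_add_distrib, Finset.sum_ite_eq' Finset.univ i a]
  simp only [Finset.mem_univ, if_true]
  congr 1
  split_ifs with h
  · rw [Finset.sum_eq_single_of_mem (⟨(i : ℕ) - 1, by omega⟩ : Fin (N + 1))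
      (Finset.mem_univ _)]
    · rw [if_pos (show (i : ℕ) = (i : ℕ) - 1 + 1 by omega)]
    · intro r _ hr
      rw [if_neg]
      intro hc
      exact hr (Fin.ext (show (r : ℕ) = (i : ℕ) - 1 by omega))
  · apply Finset.sum_eq_zero
    intro r _
    rw [if_neg]
    omega

lemma blockT_mul {N d : ℕ} (A B : Matrix (Fin N) (Fin N) (Matrix (Fin d) (Fin d) ℝ)) :
    blockT A * blockT B = blockT (B * A) := by
  ext i j
  simp [blockT, Matrix.mul_apply, Matrix.transpose_sum]

lemma blockT_one {N d : ℕ} :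
    blockT (1 : Matrix (Fin N) (Fin N) (Matrix (Fin d) (Fin d) ℝ)) = 1 := by
  ext i j
  by_cases h : i = j <;> simp [blockT, Matrix.one_apply, h, eq_comm]

/-- the interpolation product `P̌(τ) P̌⁻¹ = V(τ) Q⁻¹ F⁻¹` has
exactly two (potentially) nonzero block entries, `Λ(τ)` in block column `n`
and `Ψ(τ)` in block column `n+1`. -/
theorem interpolation_product_sparsity
    {d N : ℕ} (t : Fin (N + 1) → ℝ) (ht : StrictMono t)
    (τ : ℝ) (n np1 : Fin (N + 1)) (hnp1 : (np1 : ℕ) = (n : ℕ) + 1)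
    (hτ : t n ≤ τ ∧ τ < t np1)
    (Φ : ℝ → ℝ → Matrix (Fin d) (Fin d) ℝ)
    (hΦ_id : ∀ s : ℝ, Φ s s = 1)
    (hΦ_comp : ∀ a b c : ℝ, Φ a b * Φ b c = Φ a c)
    (Q Qinv : Fin (N + 1) → Matrix (Fin d) (Fin d) ℝ)
    (hQ : ∀ m, Q m * Qinv m = 1 ∧ Qinv m * Q m = 1)
    (Qτ : Matrix (Fin d) (Fin d) ℝ)
    (F Finv : Matrix (Fin (N + 1)) (Fin (N + 1)) (Matrix (Fin d) (Fin d) ℝ))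
    (hF : ∀ i j : Fin (N + 1),
      F i j = if (j : ℕ) ≤ (i : ℕ) then Φ (t i) (t j) else 0)
    (hFinv : ∀ i j : Fin (N + 1),
      Finv i j = if (i : ℕ) = (j : ℕ) + 1 then -Φ (t i) (t j)
                 else if j = i then 1 else 0)
    (V : Matrix (Fin 1) (Fin (N + 1)) (Matrix (Fin d) (Fin d) ℝ))
    (hV : ∀ r : Fin (N + 1),
      V 0 r = if (r : ℕ) ≤ (n : ℕ) then Φ τ (t n) * Φ (t n) (t r) * Q r
              else if r = np1 then Qτ * (Φ (t np1) τ)ᵀ else 0)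
    (Λ Ψ : Matrix (Fin d) (Fin d) ℝ)
    (hΨ : Ψ = Qτ * (Φ (t np1) τ)ᵀ * Qinv np1)
    (hΛ : Λ = Φ τ (t n) - Ψ * Φ (t np1) (t n)) :
    (V * blockT F) * (blockT Finv * Matrix.diagonal Qinv * Finv) =
        V * Matrix.diagonal Qinv * Finv ∧
      ∀ j : Fin (N + 1),
        (V * Matrix.diagonal Qinv * Finv) 0 j =
          if j = n then Λ else if j = np1 then Ψ else 0 := by
  -- `Finv` is a left inverse of `F`
  have hFinvF : Finv * F = 1 := by
    refine Matrix.ext fun i j => ?_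
    rw [Matrix.mul_apply]
    have hsummand : ∀ k : Fin (N + 1), Finv i k * F k j =
        (if k = i then F k j else 0) +
          (if (i : ℕ) = (k : ℕ) + 1 then -Φ (t i) (t k) * F k j else 0) := by
      intro k
      rw [hFinv i k]
      by_cases h1 : (i : ℕ) = (k : ℕ) + 1
      · have hki : k ≠ i := fun h => by rw [h] at h1; omega
        rw [if_pos h1, if_pos h1, if_neg hki, zero_add]
      · by_cases h2 : k = i
        · rw [if_neg h1, if_pos h2, if_pos h2, if_neg h1, one_mul, add_zero]
        · rw [if_neg h1, if_neg h2, if_neg h2, if_neg h1, zero_mul, add_zero]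
    rw [Finset.sum_congr rfl (fun k _ => hsummand k), sum_delta_pair' i]
    by_cases h0 : 1 ≤ (i : ℕ)
    · rw [dif_pos h0]
      set k0 : Fin (N + 1) := ⟨(i : ℕ) - 1, by omega⟩ with hk0
      rcases lt_trichotomy (j : ℕ) (i : ℕ) with hij | hij | hij
      · -- `j < i`: both terms cancel
        rw [hF i j, if_pos (by omega), hF k0 j, if_pos (by simp [hk0]; omega),
          neg_mul, hΦ_comp]
        have : i ≠ j := fun h => by rw [h] at hij; omega
        rw [Matrix.one_apply_ne this]
        exact add_neg_cancel _
      · -- `j = i`: diagonal entry equals `1`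
        have hij' : i = j := Fin.ext hij.symm
        rw [hF i j, if_pos (by omega), hF k0 j, if_neg (by simp [hk0]; omega),
          mul_zero, add_zero, hij', hΦ_id, Matrix.one_apply_eq]
      · -- `j > i`: everything vanishes
        rw [hF i j, if_neg (by omega), hF k0 j, if_neg (by simp [hk0]; omega),
          mul_zero, add_zero, Matrix.one_apply_ne (fun h : i = j => by
            rw [h] at hij; omega)]
    · rw [dif_neg h0, add_zero, hF i j]
      have hi0 : (i : ℕ) = 0 := by omega
      by_cases h2 : (j : ℕ) = 0
      · have : i = j := Fin.ext (by omega)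
        rw [if_pos (by omega), this, hΦ_id, Matrix.one_apply_eq]
      · rw [if_neg (by omega), Matrix.one_apply_ne (fun h : i = j => by
          rw [h] at hi0; omega)]
  -- the product of the two blockwise transposes is the identity
  have hT : blockT F * blockT Finv = 1 := by
    rw [blockT_mul, hFinvF, blockT_one]
  have hpart1 : (V * blockT F) * (blockT Finv * Matrix.diagonal Qinv * Finv) =
      V * Matrix.diagonal Qinv * Finv := by
    rw [Matrix.mul_assoc V (blockT F), Matrix.mul_assoc (blockT Finv),
      ← Matrix.mul_assoc (blockT F), hT, Matrix.one_mul, ← Matrix.mul_assoc]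
  refine ⟨hpart1, ?_⟩
  -- abbreviation for the entries of `V * diagonal Qinv`
  set g : Fin (N + 1) → Matrix (Fin d) (Fin d) ℝ := fun r => V 0 r * Qinv r with hg
  have hVD : ∀ r, (V * Matrix.diagonal Qinv) 0 r = g r := by
    intro r
    rw [Matrix.mul_diagonal]
  have hg_le : ∀ r : Fin (N + 1), (r : ℕ) ≤ (n : ℕ) → g r = Φ τ (t r) := by
    intro r hr
    rw [hg]
    simp only
    rw [hV r, if_pos hr, Matrix.mul_assoc, (hQ r).1, Matrix.mul_one]
    exact hΦ_comp _ _ _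
  have hg_np1 : g np1 = Ψ := by
    rw [hg]
    simp only
    rw [hV np1, if_neg (by omega), if_pos rfl, hΨ]
  have hg_zero : ∀ r : Fin (N + 1), ¬((r : ℕ) ≤ (n : ℕ)) → r ≠ np1 → g r = 0 := by
    intro r h1 h2
    rw [hg]
    simp only
    rw [hV r, if_neg h1, if_neg h2, Matrix.zero_mul]
  intro j
  rw [Matrix.mul_apply]
  have hsummand : ∀ r : Fin (N + 1),
      (V * Matrix.diagonal Qinv) 0 r * Finv r j =
        (if r = j then g r else 0) +
          (if (r : ℕ) = (j : ℕ) + 1 then g r * (-Φ (t r) (t j)) else 0) := by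
    intro r
    rw [hVD r, hFinv r j]
    by_cases h1 : (r : ℕ) = (j : ℕ) + 1
    · have hrj : r ≠ j := fun h => by rw [h] at h1; omega
      rw [if_pos h1, if_pos h1, if_neg hrj, zero_add]
    · by_cases h2 : r = j
      · rw [if_neg h1, if_pos h2.symm, if_pos h2, if_neg h1, Matrix.mul_one, add_zero]
      · rw [if_neg h1, if_neg (fun h : j = r => h2 h.symm), if_neg h2, if_neg h1,
          Matrix.mul_zero, add_zero]
  rw [Finset.sum_congr rfl (fun r _ => hsummand r), sum_delta_pair j]
  rcases lt_trichotomy (j : ℕ) (n : ℕ) with hjn | hjn | hjn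
  · -- case `j < n`: entry is zero
    have hNle : (j : ℕ) + 1 ≤ N := by have := n.isLt; omega
    rw [dif_pos hNle]
    set r0 : Fin (N + 1) := ⟨(j : ℕ) + 1, by omega⟩ with hr0
    rw [hg_le j (by omega), hg_le r0 (by simp [hr0]; omega)]
    have hjn' : j ≠ n := fun h => by rw [h] at hjn; omega
    have hjnp1 : j ≠ np1 := fun h => by rw [h] at hjn; omega
    rw [if_neg hjn', if_neg hjnp1, mul_neg, hΦ_comp]
    exact add_neg_cancel _
  · -- case `j = n`: entry is `Λ`
    have hjn' : j = n := Fin.ext hjn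
    have hNle : (j : ℕ) + 1 ≤ N := by have := np1.isLt; omega
    rw [dif_pos hNle]
    set r0 : Fin (N + 1) := ⟨(j : ℕ) + 1, by omega⟩ with hr0
    have hr0np1 : r0 = np1 := Fin.ext (by simp [hr0]; omega)
    rw [hr0np1, hg_np1, hg_le j (by omega), if_pos hjn', hjn', hΛ, mul_neg,
      sub_eq_add_neg]
  · -- case `j > n`
    by_cases hjnp1 : j = np1
    · -- `j = n+1`: entry is `Ψ`
      have hjn' : j ≠ n := fun h => by rw [h] at hjn; omega
      rw [if_neg hjn', if_pos hjnp1, hjnp1, hg_np1]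
      by_cases hNle : (np1 : ℕ) + 1 ≤ N
      · rw [dif_pos hNle]
        set r0 : Fin (N + 1) := ⟨(np1 : ℕ) + 1, by omega⟩ with hr0
        rw [hg_zero r0 (by simp [hr0]; omega) (by
          intro h
          have : (r0 : ℕ) = (np1 : ℕ) := by rw [h]
          simp [hr0] at this), Matrix.zero_mul, add_zero]
      · rw [dif_neg hNle, add_zero]
    · -- `j > n+1`: entry is zero
      have hjn' : j ≠ n := fun h => by rw [h] at hjn; omega
      have hjval : (n : ℕ) + 1 < (j : ℕ) := by
        rcases Nat.lt_or_ge ((n : ℕ) + 1) (j : ℕ) with h | h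
        · exact h
        · exact absurd (Fin.ext (by omega) : j = np1) hjnp1
      rw [if_neg hjn', if_neg hjnp1,
        hg_zero j (by omega) hjnp1]
      by_cases hNle : (j : ℕ) + 1 ≤ N
      · rw [dif_pos hNle]
        set r0 : Fin (N + 1) := ⟨(j : ℕ) + 1, by omega⟩ with hr0
        rw [hg_zero r0 (by simp [hr0]; omega) (by
          intro h
          have : (r0 : ℕ) = (np1 : ℕ) := by rw [h]
          simp [hr0] at this; omega), Matrix.zero_mul]
        simp
      · rw [dif_neg hNle, add_zero]
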